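/- Let κ be either ω or an uncountable cardinal carrying a κ-complete nonprincipal ultrafilter. Then every sub-binary Hausdorff tree of cardinality κ contains a chain of order type κ (a κ-branch). -/

import Mathlib

open Cardinal

universe u

/-- `y` is a child (immediate successor) of `x` in the partial order `T`. -/
def IsChildOf {T : Type u} [PartialOrder T] (x y : T) : Prop :=
  x < y ∧ ∀ z, x < z → ¬ z < y

/-- `t` lies at a limit level: its set of strict predecessors is nonempty and
has no maximal element. -/
def AtLimitLevel {T : Type u} [PartialOrder T] (t : T) : Prop :=
  (Set.Iio t).Nonempty ∧ ∀ x < t, ∃ y, x < y ∧ y < t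

/-- `T` is a sub-binary Hausdorff set-theoretic tree: a partial order with a
least element (root) in which the set of strict predecessors of every element
is well-ordered (a well-founded chain), every element has at most two children,
and no two distinct elements at limit levels have the same set of strict
predecessors. -/
def IsSubBinaryHausdorffTree (T : Type u) [PartialOrder T] : Prop :=
  (∃ r : T, ∀ t, r ≤ t) ∧
  (∀ t : T, IsChain (· ≤ ·) (Set.Iio t)) ∧
  (∀ t : T, (Set.Iio t).WellFoundedOn (· < ·)) ∧
  (∀ t : T, #{u : T | IsChildOf t u} ≤ 2) ∧
  (∀ t₁ t₂ : T, AtLimitLevel t₁ → AtLimitLevel t₂ → Set.Iio t₁ = Set.Iio t₂ → t₁ = t₂)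

lemma branch_main (κ : Cardinal.{u}) (T : Type u) [PartialOrder T]
    (hT : IsSubBinaryHausdorffTree T) (hcard : #T = κ)
    (U : Ultrafilter T)
    (hcomp : ∀ s : Set (Set T), #s < κ → (∀ A ∈ s, A ∈ U) → ⋂₀ s ∈ U)
    (hsmall : ∀ A : Set T, #A < κ → A ∉ U) :
    ∃ B : Set T, IsChain (· ≤ ·) B ∧ (∀ x ∈ B, ∀ y, y < x → y ∈ B) ∧
      Nonempty (Set.Iio κ.ord ≃o B) := by
  obtain ⟨⟨r, hr⟩, hchain, hwf, hsubbin, hhaus⟩ := hT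
  -- comparability of elements with a common upper bound
  have comp : ∀ {x y t : T}, x ≤ t → y ≤ t → x ≤ y ∨ y ≤ x := by
    intro x y t hx hy
    rcases hx.lt_or_eq with hx | rfl
    · rcases hy.lt_or_eq with hy | rfl
      · rcases eq_or_ne x y with rfl | hne
        · exact Or.inl le_rfl
        · exact hchain t hx hy hne
      · exact Or.inl hx.le
    · exact Or.inr hy
  set B : Set T := {x | {t | x ≤ t} ∈ U} with hBdef
  have chainB : IsChain (· ≤ ·) B := by
    intro x hx y hy _
    have h : {t | x ≤ t} ∩ {t | y ≤ t} ∈ U := Filter.inter_mem hx hy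
    obtain ⟨t, htx, hty⟩ := Filter.nonempty_of_mem h
    exact comp htx hty
  have dcB : ∀ x ∈ B, ∀ y, y < x → y ∈ B := by
    intro x hx y hyx
    exact Filter.mem_of_superset hx (fun t ht => hyx.le.trans ht)
  have rootB : r ∈ B := by
    have : {t | r ≤ t} = Set.univ := Set.eq_univ_of_forall hr
    simp only [hBdef, Set.mem_setOf_eq, this]
    exact Filter.univ_mem
  -- the key cardinality claim
  have hBκ : #B = κ := by
    by_contra hne
    have hBlt : #B < κ := lt_of_le_of_ne (hcard ▸ Cardinal.mk_set_le B) hne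
    -- D' : elements above all of B, not in B
    set s : Set (Set T) := (fun x : T => {t | x ≤ t}) '' B with hsdef
    have hD : ⋂₀ s ∈ U := by
      refine hcomp s (lt_of_le_of_lt Cardinal.mk_image_le hBlt) ?_
      rintro A ⟨x, hx, rfl⟩; exact hx
    have hBc : Bᶜ ∈ U := Ultrafilter.compl_mem_iff_notMem.2 (hsmall B hBlt)
    set D' : Set T := ⋂₀ s ∩ Bᶜ with hD'def
    have hD'U : D' ∈ U := Filter.inter_mem hD hBc
    have hub : ∀ t ∈ D', ∀ b ∈ B, b ≤ t := by
      intro t ht b hb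
      exact ht.1 _ ⟨b, hb, rfl⟩ 
    have hnotB : ∀ t ∈ D', t ∉ B := fun t ht => ht.2
    -- key : above each t ∈ D' there is c with Iio c = B, c ∉ B
    have key : ∀ t ∈ D', ∃ c, c ≤ t ∧ c ∉ B ∧ Set.Iio c = B := by
      intro t ht
      by_cases hcase : (Set.Iio t \ B).Nonempty
      · have hwf' : WellFounded (fun a b : T => a < b ∧ a ∈ Set.Iio t ∧ b ∈ Set.Iio t) :=
          Set.wellFoundedOn_iff.1 (hwf t)
        obtain ⟨m, hm, hmin⟩ := hwf'.has_min (Set.Iio t \ B) hcase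
        refine ⟨m, hm.1.le, hm.2, ?_⟩
        apply Set.Subset.antisymm
        · intro y hy
          by_contra hyB
          exact hmin y ⟨hy.trans hm.1, hyB⟩ ⟨hy, hy.trans hm.1, hm.1⟩
        · intro b hb
          have hbt : b ≤ t := hub t ht b hb
          have hbm : b ≠ m := fun h => hm.2 (h ▸ hb)
          have hbt' : b < t := lt_of_le_of_ne hbt (fun h => hnotB t ht (h ▸ hb))
          rcases comp hbt'.le hm.1.le with h | h
          · exact lt_of_le_of_ne h hbm
          · exact absurd (dcB b hb m (lt_of_le_of_ne h (Ne.symm hbm))) hm.2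
      · refine ⟨t, le_rfl, hnotB t ht, ?_⟩
        apply Set.Subset.antisymm
        · intro y hy
          by_contra hyB
          exact hcase ⟨y, hy, hyB⟩
        · intro b hb
          exact lt_of_le_of_ne (hub t ht b hb) (fun h => hnotB t ht (h ▸ hb))
    -- the set of candidates is finite
    set K : Set T := {c | c ∉ B ∧ Set.Iio c = B} with hKdef
    have hKfin : K.Finite := by
      by_cases hmax : ∃ m ∈ B, ∀ b ∈ B, b ≤ m
      · obtain ⟨m, hmB, hmmax⟩ := hmax
        have hsub : K ⊆ {u : T | IsChildOf m u} := by
          rintro c ⟨hcB, hIio⟩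
          have hmc : m < c := by rw [← hIio] at hmB; exact hmB
          refine ⟨hmc, fun z hz hzc => ?_⟩
          have : z ∈ B := hIio ▸ (Set.mem_Iio.2 hzc)
          exact absurd (hmmax z this) (not_le_of_gt hz)
        have h2 : #{u : T | IsChildOf m u} < ℵ₀ :=
          lt_of_le_of_lt (hsubbin m) (by exact_mod_cast Cardinal.nat_lt_aleph0 2)
        exact Set.Finite.subset (Cardinal.lt_aleph0_iff_set_finite.1 h2) hsub
      · push_neg at hmax
        have hlim : ∀ c ∈ K, AtLimitLevel c := by
          rintro c ⟨hcB, hIio⟩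
          constructor
          · exact ⟨r, hIio ▸ rootB⟩
          · intro x hxc
            have hxB : x ∈ B := hIio ▸ Set.mem_Iio.2 hxc
            obtain ⟨y, hyB, hyx⟩ := hmax x hxB
            have hyc : y < c := by rw [← hIio] at hyB; exact hyB
            rcases comp hxc.le hyc.le with h | h
            · exact ⟨y, lt_of_le_of_ne h (fun hxy => hyx (hxy ▸ le_rfl)), hyc⟩
            · exact absurd h hyx
        have hss : K.Subsingleton := by
          rintro c₁ hc₁ c₂ hc₂
          exact hhaus c₁ c₂ (hlim c₁ hc₁) (hlim c₂ hc₂) (hc₁.2.trans hc₂.2.symm)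
        exact hss.finite
    -- no up-set of a K element is in U
    have hKnot : ∀ c ∈ K, {t | c ≤ t} ∉ U := fun c hc h => hc.1 h
    have hV : (⋂ c ∈ K, {t | c ≤ t}ᶜ) ∈ U := by
      refine (Filter.biInter_mem hKfin).2 (fun c hc => ?_)
      exact Ultrafilter.compl_mem_iff_notMem.2 (hKnot c hc)
    obtain ⟨t, htD, htV⟩ := Filter.nonempty_of_mem (Filter.inter_mem hD'U hV)
    obtain ⟨c, hct, hcB, hIio⟩ := key t htD
    have : t ∈ {t | c ≤ t}ᶜ := by
      simp only [Set.mem_iInter] at htV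
      exact htV c ⟨hcB, hIio⟩
    exact this hct
  -- now build the order isomorphism
  letI : LinearOrder B :=
    { (inferInstance : PartialOrder B) with
      le_total := fun a b => chainB.total a.2 b.2
      toDecidableLE := Classical.decRel _
      toDecidableEq := Classical.decEq _
      toDecidableLT := Classical.decRel _ }
  have hwfB : WellFounded ((· < ·) : B → B → Prop) := by
    rw [RelEmbedding.wellFounded_iff_isEmpty]
    constructor
    rintro f
    have hdesc : ∀ n : ℕ, (f (n + 1) : T) < f n := fun n => f.map_rel_iff.2 (Nat.lt_succ_self n)
    have hall : ∀ n : ℕ, (f (n + 1) : T) ∈ Set.Iio (f 0 : T) := by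
      intro n
      induction n with
      | zero => exact hdesc 0
      | succ k ih => exact (hdesc (k + 1)).trans ih
    have hW := (hwf (f 0 : T))
    rw [Set.wellFoundedOn_iff_no_descending_seq] at hW
    exact hW (RelEmbedding.natGT (fun n => (f (n + 1) : T)) (fun n => hdesc (n + 1)))
      (fun n => hall n)
  letI : WellFoundedLT B := ⟨hwfB⟩
  haveI hWO : IsWellOrder B (· < ·) := inferInstance
  have hord : κ.ord ≤ Ordinal.type ((· < ·) : B → B → Prop) := by
    rw [Cardinal.ord_le, Ordinal.card_type, hBκ]
  set f : Set.Iio κ.ord → T := fun α =>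
    ((Ordinal.enum ((· < ·) : B → B → Prop) ⟨α.1, lt_of_lt_of_le α.2 hord⟩ : B) : T) with hf
  have hfB : ∀ α, f α ∈ B := fun α =>
    (Ordinal.enum ((· < ·) : B → B → Prop) ⟨α.1, lt_of_lt_of_le α.2 hord⟩).2
  have hmono : StrictMono f := by
    intro α β hαβ
    have h1 : (⟨α.1, lt_of_lt_of_le α.2 hord⟩ : {o // o < Ordinal.type ((· < ·) : B → B → Prop)})
        < ⟨β.1, lt_of_lt_of_le β.2 hord⟩ := hαβ
    exact Subtype.coe_lt_coe.2 (Ordinal.enum_lt_enum.2 h1)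
  refine ⟨Set.range f, ?_, ?_, ⟨hmono.orderIso f⟩⟩
  · intro x hx y hy hxy
    obtain ⟨α, rfl⟩ := hx
    obtain ⟨β, rfl⟩ := hy
    exact chainB (hfB α) (hfB β) hxy
  · rintro x ⟨α, rfl⟩ y hyx
    have hyB : y ∈ B := dcB _ (hfB α) y hyx
    have hlt : (⟨y, hyB⟩ : B) <
        Ordinal.enum ((· < ·) : B → B → Prop) ⟨α.1, lt_of_lt_of_le α.2 hord⟩ :=
      Subtype.coe_lt_coe.1 hyx
    have hty : Ordinal.typein ((· < ·) : B → B → Prop) ⟨y, hyB⟩ < α.1 := by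
      have h2 := (Ordinal.typein_lt_typein ((· < ·) : B → B → Prop)).2 hlt
      rwa [Ordinal.typein_enum] at h2
    refine ⟨⟨Ordinal.typein ((· < ·) : B → B → Prop) ⟨y, hyB⟩, hty.trans α.2⟩, ?_⟩
    show ((Ordinal.enum ((· < ·) : B → B → Prop) ⟨_, _⟩ : B) : T) = y
    exact congrArg Subtype.val (Ordinal.enum_typein ((· < ·) : B → B → Prop) ⟨y, hyB⟩)


/-- Let `κ` be either `ω` or an uncountable cardinal carrying
a `κ`-complete nonprincipal ultrafilter.  Then every sub-binary Hausdorff tree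
of cardinality `κ` contains a `κ`-branch: a downward closed chain of order type
`κ`. -/
theorem subBinaryHausdorffTree_has_kappa_branch
    (κ : Cardinal.{u}) (T : Type u) [PartialOrder T]
    (hT : IsSubBinaryHausdorffTree T) (hcard : #T = κ)
    (hκ : κ = ℵ₀ ∨
      (ℵ₀ < κ ∧ ∃ U : Ultrafilter T,
        (∀ s : Set (Set T), #s < κ → (∀ A ∈ s, A ∈ U) → ⋂₀ s ∈ U) ∧
        (∀ A : Set T, A.Finite → A ∉ U))) :
    ∃ B : Set T, IsChain (· ≤ ·) B ∧ (∀ x ∈ B, ∀ y, y < x → y ∈ B) ∧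
      Nonempty (Set.Iio κ.ord ≃o B) := by
  rcases hκ with rfl | ⟨hκ, U, hcomp, hfin⟩
  · haveI : Infinite T := Cardinal.infinite_iff.2 hcard.ge
    refine branch_main _ T hT hcard (Filter.hyperfilter T) ?_ ?_
    · intro s hs hA
      exact (Filter.sInter_mem (Cardinal.lt_aleph0_iff_set_finite.1 hs)).2 hA
    · intro A hA
      exact Filter.notMem_hyperfilter_of_finite (Cardinal.lt_aleph0_iff_set_finite.1 hA)
  · refine branch_main _ T hT hcard U hcomp ?_
    intro A hA
    by_cases hfinA : A.Finite
    · exact hfin A hfinA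
    · intro hAU
      have hcompl : ∀ a : T, ({a}ᶜ : Set T) ∈ U :=
        fun a => Ultrafilter.compl_mem_iff_notMem.2 (hfin {a} (Set.finite_singleton a))
      have hs : #((fun a : T => ({a}ᶜ : Set T)) '' A) < κ :=
        lt_of_le_of_lt Cardinal.mk_image_le hA
      have hint : ⋂₀ ((fun a : T => ({a}ᶜ : Set T)) '' A) ∈ U := by
        refine hcomp _ hs ?_
        rintro S ⟨a, _, rfl⟩; exact hcompl a
      have : ⋂₀ ((fun a : T => ({a}ᶜ : Set T)) '' A) = Aᶜ := by
        ext t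
        constructor
        · intro h ha
          exact h ({t}ᶜ) ⟨t, ha, rfl⟩ rfl
        · rintro h S ⟨a, ha, rfl⟩
          simp only [Set.mem_compl_iff, Set.mem_singleton_iff]
          rintro rfl
          exact h ha
      rw [this] at hint
      exact (Ultrafilter.compl_mem_iff_notMem.1 hint) hAU
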